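/- A commutative ring R has almost stable range 1 if and only if for every triple (a,b,c) ∈ R³ such that (a,b) is unimodular and c does not lie in the Jacobson radical of R, there exists r ∈ R such that (a+br, c) is unimodular. -/

import Mathlib

/-- `R` has almost stable range 1: for every ideal not contained in the Jacobson radical,
the quotient has stable range at most 1. -/
def AlmostStableRange1 (R : Type*) [CommRing R] : Prop :=
  ∀ I : Ideal R, ¬ I ≤ Ideal.jacobson (⊥ : Ideal R) →
    ∀ a b : R ⧸ I, Ideal.span {a, b} = ⊤ → ∃ r : R ⧸ I, IsUnit (a + b * r)

theorem stmt12 (R : Type*) [CommRing R] :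
    AlmostStableRange1 R ↔
      ∀ a b c : R, Ideal.span {a, b} = ⊤ → c ∉ Ideal.jacobson (⊥ : Ideal R) →
        ∃ r : R, Ideal.span {a + b * r, c} = ⊤ := by
  constructor
  · intro h a b c hab hc
    set I : Ideal R := Ideal.span {c}
    have hI : ¬ I ≤ Ideal.jacobson (⊥ : Ideal R) := by
      simpa [I, Ideal.span_singleton_le_iff_mem] using hc
    have hab' : Ideal.span {Ideal.Quotient.mk I a, Ideal.Quotient.mk I b} = ⊤ := by
      have := Ideal.map_span (Ideal.Quotient.mk I) ({a, b} : Set R)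
      rw [hab, Ideal.map_top, Set.image_pair] at this
      exact this.symm
    obtain ⟨r, hr⟩ := h I hI (Ideal.Quotient.mk I a) (Ideal.Quotient.mk I b) hab'
    obtain ⟨r', rfl⟩ := Ideal.Quotient.mk_surjective r
    obtain ⟨s, hs⟩ := isUnit_iff_exists_inv.mp hr
    obtain ⟨s', rfl⟩ := Ideal.Quotient.mk_surjective s
    refine ⟨r', ?_⟩
    have hmem : (a + b * r') * s' - 1 ∈ I := by
      rw [← Ideal.Quotient.eq_zero_iff_mem]
      rw [map_sub, sub_eq_zero]
      simpa using hs
    obtain ⟨t, ht⟩ := Ideal.mem_span_singleton'.mp hmem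
    rw [Ideal.eq_top_iff_one, Ideal.mem_span_pair]
    exact ⟨s', -t, by linear_combination -ht⟩
  · intro h I hI a b hab
    obtain ⟨c, hcI, hc⟩ := SetLike.not_le_iff_exists.mp hI
    obtain ⟨A, rfl⟩ := Ideal.Quotient.mk_surjective a
    obtain ⟨B, rfl⟩ := Ideal.Quotient.mk_surjective b
    have h1 : (1 : R ⧸ I) ∈ Ideal.span {Ideal.Quotient.mk I A, Ideal.Quotient.mk I B} := by
      rw [hab]; trivial
    obtain ⟨x, y, hxy⟩ := Ideal.mem_span_pair.mp h1
    obtain ⟨X, rfl⟩ := Ideal.Quotient.mk_surjective x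
    obtain ⟨Y, rfl⟩ := Ideal.Quotient.mk_surjective y
    have hiI : 1 - X * A - Y * B ∈ I := by
      rw [← Ideal.Quotient.eq_zero_iff_mem]
      rw [map_sub, map_sub, map_one, map_mul, map_mul, sub_sub, sub_eq_zero]
      exact hxy.symm
    set i := 1 - X * A - Y * B with hi
    have hpair : Ideal.span {A, Y * B + i} = ⊤ := by
      rw [Ideal.eq_top_iff_one, Ideal.mem_span_pair]
      exact ⟨X, 1, by ring⟩
    obtain ⟨r, hr⟩ := h A (Y * B + i) c hpair hc
    obtain ⟨s, t, hst⟩ := Ideal.mem_span_pair.mp (by rw [hr]; trivial :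
      (1 : R) ∈ Ideal.span {A + (Y * B + i) * r, c})
    refine ⟨Ideal.Quotient.mk I (Y * r), ?_⟩
    apply IsUnit.of_mul_eq_one (Ideal.Quotient.mk I s)
    have : Ideal.Quotient.mk I ((A + (Y * B + i) * r) * s) = 1 := by
      have hc0 : Ideal.Quotient.mk I c = 0 := Ideal.Quotient.eq_zero_iff_mem.mpr hcI
      have : Ideal.Quotient.mk I (s * (A + (Y * B + i) * r) + t * c) = 1 := by
        rw [hst]; rfl
      rw [map_add, map_mul, map_mul, hc0, mul_zero, add_zero, mul_comm] at this
      rw [map_mul]; exact this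
    have hi0 : Ideal.Quotient.mk I i = 0 := Ideal.Quotient.eq_zero_iff_mem.mpr hiI
    calc (Ideal.Quotient.mk I A + Ideal.Quotient.mk I B * Ideal.Quotient.mk I (Y * r)) *
          Ideal.Quotient.mk I s
        = Ideal.Quotient.mk I ((A + (Y * B + i) * r) * s)
          - Ideal.Quotient.mk I i * Ideal.Quotient.mk I (r * s) := by
          push_cast [map_add, map_mul]
          ring
      _ = 1 := by rw [this, hi0, zero_mul, sub_zero]
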